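/- Let R be a subdirect product of SBM algebras A_1, …, A_n, and let congruences α_l ≺ β_l ≤ θ_{A_l} be given for each l ∈ [n]. If coordinates i, j ∈ [n] (i ≠ j) are not ᾱβ̄-aligned in R, then the interval (α_i,β_i) can be separated from (α_j,β_j) in R. -/

import Mathlib

namespace SBMPaper

variable {A : Type*}

/-- A Mal'tsev operation: `m a b b = m b b a = a`. -/
def IsMaltsevOp (m : A → A → A → A) : Prop :=
  ∀ a b : A, m a b b = a ∧ m b b a = a

/-- Containment of binary relations. -/
def RelLE (α β : A → A → Prop) : Prop := ∀ a b : A, α a b → β a b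

/-- `p(β) ⊆ α` : the unary map `p` maps the relation `β` into `α`. -/
def PolMaps (p : A → A) (β α : A → A → Prop) : Prop :=
  ∀ a b : A, β a b → α (p a) (p b)

/-- `α ≺ β`: a prime (covering) interval with respect to the class `Cong` of congruences. -/
def PrimeCov (Cong : (A → A → Prop) → Prop) (α β : A → A → Prop) : Prop :=
  RelLE α β ∧ α ≠ β ∧
    ∀ γ : A → A → Prop, Cong γ → RelLE α γ → RelLE γ β → γ = α ∨ γ = β

/-- An `(α,β)`-minimal set with respect to the class `Pol` of unary polynomials:
an image `p(A)` of a unary polynomial with `p(β) ⊄ α`, minimal under inclusion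
among all such images. -/
def IsMinSetP (Pol : (A → A) → Prop) (α β : A → A → Prop) (U : Set A) : Prop :=
  (∃ p, Pol p ∧ Set.range p = U ∧ ¬ PolMaps p β α) ∧
  ∀ U' : Set A, (∃ p, Pol p ∧ Set.range p = U' ∧ ¬ PolMaps p β α) → U' ⊆ U → U' = U

/-- Unary polynomials of a Mal'tsev algebra `(A; m)`. -/
inductive MPol (m : A → A → A → A) : (A → A) → Prop
  | id : MPol m fun x => x
  | const (a : A) : MPol m fun _ => a
  | mc {p q r : A → A} : MPol m p → MPol m q → MPol m r →
      MPol m fun x => m (p x) (q x) (r x)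

/-- Congruences of a Mal'tsev algebra `(A; m)`. -/
def IsMCong (m : A → A → A → A) (α : A → A → Prop) : Prop :=
  Equivalence α ∧
  ∀ a a' b b' c c' : A, α a a' → α b b' → α c c' → α (m a b c) (m a' b' c')

/-- A congruence of an algebra with a binary operation `dot` and a ternary operation `m`. -/
def IsCong (dot : A → A → A) (m : A → A → A → A) (α : A → A → Prop) : Prop :=
  Equivalence α ∧
  (∀ a a' b b' : A, α a a' → α b b' → α (dot a b) (dot a' b')) ∧
  (∀ a a' b b' c c' : A, α a a' → α b b' → α c c' → α (m a b c) (m a' b' c'))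

/-- A semilattice block Mal'tsev (SBM) algebra `(A; dot, m)` with witnessing congruence `σ`:
`σ` is a congruence, the operation induced by `dot` on `A/σ` is a semilattice operation,
`dot` is the first projection on `σ`-blocks, `m` is Mal'tsev on `σ`-blocks,
`m(a,b,c) ≡_σ (a·b)·c`, and `x·(x·y) = x·y`. -/
def IsSBM (dot : A → A → A) (m : A → A → A → A) (σ : A → A → Prop) : Prop :=
  IsCong dot m σ ∧
  (∀ a b : A, σ (dot a b) (dot b a)) ∧
  (∀ a b c : A, σ (dot (dot a b) c) (dot a (dot b c))) ∧
  (∀ a b : A, σ a b → dot a b = a) ∧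
  (∀ a b : A, σ a b → m a b b = a ∧ m b b a = a) ∧
  (∀ a b c : A, σ (m a b c) (dot (dot a b) c)) ∧
  (∀ x y : A, dot x (dot x y) = dot x y)

/-- `a` belongs to the greatest `σ`-block `max(A)` of the semilattice `A/σ`. -/
def InMax (dot : A → A → A) (σ : A → A → Prop) (a : A) : Prop :=
  ∀ b : A, σ (dot b a) a

/-- The equivalence relation `θ_A` whose blocks are `max(A)` and the singletons outside it. -/
def ThetaA (dot : A → A → A) (σ : A → A → Prop) (a b : A) : Prop :=
  a = b ∨ (InMax dot σ a ∧ InMax dot σ b)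

/-- Unary polynomials of an SBM algebra `(A; dot, m)`. -/
inductive UPol (dot : A → A → A) (m : A → A → A → A) : (A → A) → Prop
  | id : UPol dot m fun x => x
  | const (a : A) : UPol dot m fun _ => a
  | dotc {p q : A → A} : UPol dot m p → UPol dot m q →
      UPol dot m fun x => dot (p x) (q x)
  | mc {p q r : A → A} : UPol dot m p → UPol dot m q → UPol dot m r →
      UPol dot m fun x => m (p x) (q x) (r x)

/-- `A` has a minimal (neutral) element. -/
def HasMinElt (dot : A → A → A) : Prop :=
  ∃ a : A, ∀ b : A, dot a b = b ∧ dot b a = b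

/-- `a` is an `αβ`-split element. -/
def IsSplit (dot : A → A → A) (α β : A → A → Prop) (a : A) : Prop :=
  ∃ b c : A, β b c ∧ ¬ α (dot a b) (dot a c)

/-- Unary polynomials of a binary relation `S ⊆ A × B`: pairs of maps generated from
the identity and the constant pairs taken from `S`, closed under coordinatewise
`dot` and `m`. -/
inductive BPol {B : Type*} (dA : A → A → A) (mA : A → A → A → A)
    (dB : B → B → B) (mB : B → B → B → B) (S : A → B → Prop) :
    (A → A) → (B → B) → Prop
  | id : BPol dA mA dB mB S (fun x => x) (fun y => y)
  | const (a : A) (b : B) (h : S a b) : BPol dA mA dB mB S (fun _ => a) (fun _ => b)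
  | dotc {p₁ q₁ : A → A} {p₂ q₂ : B → B} : BPol dA mA dB mB S p₁ p₂ →
      BPol dA mA dB mB S q₁ q₂ →
      BPol dA mA dB mB S (fun x => dA (p₁ x) (q₁ x)) (fun y => dB (p₂ y) (q₂ y))
  | mc {p₁ q₁ r₁ : A → A} {p₂ q₂ r₂ : B → B} : BPol dA mA dB mB S p₁ p₂ →
      BPol dA mA dB mB S q₁ q₂ → BPol dA mA dB mB S r₁ r₂ →
      BPol dA mA dB mB S (fun x => mA (p₁ x) (q₁ x) (r₁ x))
        (fun y => mB (p₂ y) (q₂ y) (r₂ y))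

section Subdirect

variable {n : ℕ} {F : Fin n → Type*}

/-- `R` is a subdirect product of the algebras `F 1, …, F n`. -/
def SubdirectProd (dot : ∀ i, F i → F i → F i) (m : ∀ i, F i → F i → F i → F i)
    (R : Set (∀ i, F i)) : Prop :=
  R.Nonempty ∧
  (∀ x ∈ R, ∀ y ∈ R, (fun i => dot i (x i) (y i)) ∈ R) ∧
  (∀ x ∈ R, ∀ y ∈ R, ∀ z ∈ R, (fun i => m i (x i) (y i) (z i)) ∈ R) ∧
  (∀ (i : Fin n) (a : F i), ∃ x ∈ R, x i = a)

/-- Unary polynomials of a relation `R`: families of maps generated from the identity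
family and constant families taken from `R`, closed under coordinatewise `dot` and `m`. -/
inductive RPol (dot : ∀ i, F i → F i → F i) (m : ∀ i, F i → F i → F i → F i)
    (R : Set (∀ i, F i)) : (∀ i, F i → F i) → Prop
  | id : RPol dot m R fun _ x => x
  | const (a : ∀ i, F i) (ha : a ∈ R) : RPol dot m R fun i _ => a i
  | dotc {p q : ∀ i, F i → F i} : RPol dot m R p → RPol dot m R q →
      RPol dot m R fun i x => dot i (p i x) (q i x)
  | mc {p q r : ∀ i, F i → F i} : RPol dot m R p → RPol dot m R q → RPol dot m R r →
      RPol dot m R fun i x => m i (p i x) (q i x) (r i x)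

/-- The interval `(α,β)` at coordinate `i` can be separated from `(γ,δ)` at
coordinate `j` in `R`. -/
def SepIn (dot : ∀ i, F i → F i → F i) (m : ∀ i, F i → F i → F i → F i)
    (R : Set (∀ i, F i)) (i : Fin n) (α β : F i → F i → Prop)
    (j : Fin n) (γ δ : F j → F j → Prop) : Prop :=
  ∃ p, RPol dot m R p ∧ ¬ PolMaps (p i) β α ∧ PolMaps (p j) δ γ

/-- `(i, α, β) ∈ I_R` : `α ≺ β ≤ θ_{A_i}` is a prime interval of congruences of `F i`. -/
def InIR (dot : ∀ i, F i → F i → F i) (m : ∀ i, F i → F i → F i → F i)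
    (σ : ∀ i, F i → F i → Prop) (i : Fin n) (α β : F i → F i → Prop) : Prop :=
  IsCong (dot i) (m i) α ∧ IsCong (dot i) (m i) β ∧
  PrimeCov (IsCong (dot i) (m i)) α β ∧ RelLE β (ThetaA (dot i) (σ i))

end Subdirect

section CSP

variable {V : Type*} {D : V → Type*}

/-- A constraint: a scope `W ⊆ V` together with a relation on `∏_{v ∈ W} D v`. -/
abbrev Constr (V : Type*) (D : V → Type*) := Σ W : Set V, Set (∀ v : W, D v.1)

/-- Solutions of the restricted instance `P_W` (recorded as full assignments;
only the values on `W` are constrained). -/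
def SolOn (C : Set (Constr V D)) (W : Set V) : Set (∀ v, D v) :=
  {φ | ∀ c ∈ C, ∃ x ∈ c.2, ∀ u : c.1, u.1 ∈ W → x u = φ u.1}

/-- The binary relation `S_{vw}` of partial solutions on `{v, w}`. -/
def SvwRel (C : Set (Constr V D)) (v w : V) (a : D v) (b : D w) : Prop :=
  ∃ φ ∈ SolOn C {v, w}, φ v = a ∧ φ w = b

/-- The instance is tightened : `A_v = S_v` for every variable `v`. -/
def Tight (C : Set (Constr V D)) : Prop :=
  ∀ (v : V) (a : D v), ∃ φ ∈ SolOn C {v}, φ v = a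

/-- The restricted instance `P_W` is minimal: every tuple of every constraint of `P_W`
extends to a solution of `P_W`. -/
def MinOn (C : Set (Constr V D)) (W : Set V) : Prop :=
  ∀ c ∈ C, ∀ x ∈ c.2, ∃ φ ∈ SolOn C W, ∀ u : c.1, u.1 ∈ W → φ u.1 = x u

/-- `k`-minimality: `P_W` is minimal for every `k`-element `W ⊆ V`. -/
def KMin (C : Set (Constr V D)) (k : ℕ) : Prop :=
  ∀ W : Set V, W.ncard = k → MinOn C W

/-- `(v, α, β) ∈ I_P` : `α ≺ β ≤ θ_{A_v}` is a prime interval of congruences of `D v`. -/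
def InIP (dot : ∀ v, D v → D v → D v) (m : ∀ v, D v → D v → D v → D v)
    (σ : ∀ v, D v → D v → Prop) (v : V) (α β : D v → D v → Prop) : Prop :=
  IsCong (dot v) (m v) α ∧ IsCong (dot v) (m v) β ∧
  PrimeCov (IsCong (dot v) (m v)) α β ∧ RelLE β (ThetaA (dot v) (σ v))

/-- `(α,β)` (at `v`) can be separated from `(γ,δ)` (at `w`) in `S_{vw}`. -/
def SepPair (dot : ∀ v, D v → D v → D v) (m : ∀ v, D v → D v → D v → D v)
    (C : Set (Constr V D)) (v : V) (α β : D v → D v → Prop)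
    (w : V) (γ δ : D w → D w → Prop) : Prop :=
  ∃ p q, BPol (dot v) (m v) (dot w) (m w) (SvwRel C v w) p q ∧
    ¬ PolMaps p β α ∧ PolMaps q δ γ

/-- The coherent set `W_{vαβ}`. -/
def WCoh (dot : ∀ v, D v → D v → D v) (m : ∀ v, D v → D v → D v → D v)
    (σ : ∀ v, D v → D v → Prop) (C : Set (Constr V D))
    (v : V) (α β : D v → D v → Prop) : Set V :=
  {w | ∃ γ δ : D w → D w → Prop, InIP dot m σ w γ δ ∧
    ¬ SepPair dot m C v α β w γ δ}

/-- Block-minimality: `P_{W_{vαβ}}` is minimal for every `(v,α,β) ∈ I_P`. -/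
def BlockMin (dot : ∀ v, D v → D v → D v) (m : ∀ v, D v → D v → D v → D v)
    (σ : ∀ v, D v → D v → Prop) (C : Set (Constr V D)) : Prop :=
  ∀ (v : V) (α β : D v → D v → Prop), InIP dot m σ v α β →
    MinOn C (WCoh dot m σ C v α β)

/-- A `ḡ`-ensemble for the instance `C`. -/
def IsEnsemble (dot : ∀ v, D v → D v → D v) (m : ∀ v, D v → D v → D v → D v)
    (σ : ∀ v, D v → D v → Prop) (C : Set (Constr V D))
    (g : ∀ u, D u → D u → Prop)
    (Φ : ∀ (v : V) (α β : D v → D v → Prop), InIP dot m σ v α β → ∀ u, D u) : Prop :=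
  (∀ (v : V) (α β : D v → D v → Prop) (h : InIP dot m σ v α β),
    Φ v α β h ∈ SolOn C (WCoh dot m σ C v α β)) ∧
  (∀ (v : V) (α β : D v → D v → Prop) (h : InIP dot m σ v α β)
      (w : V) (γ δ : D w → D w → Prop) (h' : InIP dot m σ w γ δ)
      (u : V), u ∈ WCoh dot m σ C v α β → u ∈ WCoh dot m σ C w γ δ →
    g u (Φ v α β h u) (Φ w γ δ h' u)) ∧
  (∀ c ∈ C, ∃ x ∈ c.2, ∀ (u : c.1) (v : V) (α β : D v → D v → Prop)
      (h : InIP dot m σ v α β), u.1 ∈ WCoh dot m σ C v α β →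
    g u.1 (x u) (Φ v α β h u.1))

end CSP

end SBMPaper


namespace SBMPaper

section SepAux

open Classical

variable {n : ℕ} {F : Fin n → Type*}
variable {dot : ∀ i, F i → F i → F i} {m : ∀ i, F i → F i → F i → F i}
variable {σ : ∀ i, F i → F i → Prop} {R : Set (∀ i, F i)}

private lemma rpol_comp {p q : ∀ l, F l → F l} (hp : RPol dot m R p)
    (hq : RPol dot m R q) : RPol dot m R (fun l x => p l (q l x)) := by
  induction hp with
  | id => exact hq
  | const a ha => exact RPol.const a ha
  | dotc _ _ ih1 ih2 => exact RPol.dotc ih1 ih2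
  | mc _ _ _ ih1 ih2 ih3 => exact RPol.mc ih1 ih2 ih3

private lemma rpol_app_mem (hR : SubdirectProd dot m R) {p : ∀ l, F l → F l}
    (hp : RPol dot m R p) {z : ∀ l, F l} (hz : z ∈ R) :
    (fun l => p l (z l)) ∈ R := by
  induction hp with
  | id => exact hz
  | const a ha => exact ha
  | dotc _ _ ih1 ih2 => exact hR.2.1 _ ih1 _ ih2
  | mc _ _ _ ih1 ih2 ih3 => exact hR.2.2.1 _ ih1 _ ih2 _ ih3

private lemma rpol_pres {l : Fin n} {γ : F l → F l → Prop}
    (hγ : IsCong (dot l) (m l) γ) {p : ∀ l, F l → F l}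
    (hp : RPol dot m R p) {u v : F l} (h : γ u v) : γ (p l u) (p l v) := by
  induction hp with
  | id => exact h
  | const a _ => exact hγ.1.refl _
  | dotc _ _ ih1 ih2 => exact hγ.2.1 _ _ _ _ ih1 ih2
  | mc _ _ _ ih1 ih2 ih3 => exact hγ.2.2 _ _ _ _ _ _ ih1 ih2 ih3

end SepAux

section SbmAux

variable {A : Type*} {dt : A → A → A} {mm : A → A → A → A} {sg : A → A → Prop}

private lemma sbm_inmax_sigma (hs : IsSBM dt mm sg) {a b : A}
    (ha : InMax dt sg a) (hb : InMax dt sg b) : sg a b := by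
  have e := hs.1.1
  exact e.trans (e.trans (e.symm (ha b)) (e.symm (hs.2.1 a b))) (hb a)

private lemma sbm_inmax_dot (hs : IsSBM dt mm sg) (w : A) {t : A}
    (ht : InMax dt sg t) : InMax dt sg (dt w t) := by
  intro b
  have e := hs.1.1
  exact e.trans (e.trans (e.symm (hs.2.2.1 b w t)) (ht (dt b w))) (e.symm (ht w))

private lemma sbm_dot_inmax_eq (hs : IsSBM dt mm sg) {u t : A}
    (hu : InMax dt sg u) (ht : InMax dt sg t) : dt u t = u :=
  hs.2.2.2.1 u t (sbm_inmax_sigma hs hu ht)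

private lemma sbm_m_right (hs : IsSBM dt mm sg) {x s : A} (h : sg x s) :
    mm x s s = x := (hs.2.2.2.2.1 x s h).1

private lemma sbm_m_left (hs : IsSBM dt mm sg) {s k : A} (h : sg k s) :
    mm s s k = k := (hs.2.2.2.2.1 k s h).2

/-- `[a] ≤ [t]` is preserved when `t` is multiplied on the right. -/
private lemma sbm_sle_dot (hs : IsSBM dt mm sg) {a t : A} (z : A)
    (h : sg (dt a t) t) : sg (dt a (dt t z)) (dt t z) := by
  have e := hs.1.1
  refine e.trans (e.symm (hs.2.2.1 a t z)) ?_
  exact hs.1.2.1 _ _ _ _ h (e.refl z)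

private lemma sbm_sle_self_dot (hs : IsSBM dt mm sg) (z t : A) :
    sg (dt z (dt t z)) (dt t z) := by
  have e := hs.1.1
  have h1 : sg (dt z (dt t z)) (dt z (dt z t)) :=
    hs.1.2.1 _ _ _ _ (e.refl z) (hs.2.1 t z)
  have h2 : dt z (dt z t) = dt z t := hs.2.2.2.2.2.2 z t
  refine e.trans h1 ?_
  rw [h2]
  exact hs.2.1 z t

end SbmAux

section TopAux

variable {n : ℕ} {F : Fin n → Type*}
variable {dot : ∀ i, F i → F i → F i} {m : ∀ i, F i → F i → F i → F i}
variable {σ : ∀ i, F i → F i → Prop} {R : Set (∀ i, F i)}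

private def dotFold (dot : ∀ i, F i → F i → F i) : (∀ l, F l) → List (∀ l, F l) → (∀ l, F l) :=
  fun t L => L.foldl (fun t z => fun l => dot l (t l) (z l)) t

private lemma dotFold_mem (hR : SubdirectProd dot m R) :
    ∀ (L : List (∀ l, F l)) (t : ∀ l, F l), t ∈ R → (∀ z ∈ L, z ∈ R) →
      dotFold dot t L ∈ R := by
  intro L
  induction L with
  | nil => intro t ht _; exact ht
  | cons z L ih =>
      intro t ht hL
      exact ih _ (hR.2.1 _ ht _ (hL z (by simp))) (fun w hw => hL w (by simp [hw]))

private lemma dotFold_sle (hsbm : ∀ l, IsSBM (dot l) (m l) (σ l)) :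
    ∀ (L : List (∀ l, F l)) (t a : ∀ l, F l) (l : Fin n),
      σ l (dot l (a l) (t l)) (t l) →
      σ l (dot l (a l) (dotFold dot t L l)) (dotFold dot t L l) := by
  intro L
  induction L with
  | nil => intro t a l h; exact h
  | cons z L ih =>
      intro t a l h
      exact ih _ a l (sbm_sle_dot (hsbm l) (z l) h)

private lemma dotFold_sle_mem (hsbm : ∀ l, IsSBM (dot l) (m l) (σ l)) :
    ∀ (L : List (∀ l, F l)) (t z : ∀ l, F l), z ∈ L → ∀ l : Fin n,
      σ l (dot l (z l) (dotFold dot t L l)) (dotFold dot t L l) := by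
  intro L
  induction L with
  | nil => intro t z hz; exact absurd hz List.not_mem_nil
  | cons w L ih =>
      intro t z hz l
      rcases List.mem_cons.1 hz with h | h
      · subst h
        exact dotFold_sle hsbm L _ z l (sbm_sle_self_dot (hsbm l) (z l) (t l))
      · exact ih _ z h l

private lemma exists_top [∀ i, Fintype (F i)]
    (hsbm : ∀ l, IsSBM (dot l) (m l) (σ l)) (hR : SubdirectProd dot m R) :
    ∃ T ∈ R, ∀ l, InMax (dot l) (σ l) (T l) := by
  have hfin : R.Finite := Set.toFinite R
  obtain ⟨r0, hr0⟩ := hR.1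
  refine ⟨dotFold dot r0 hfin.toFinset.toList, ?_, ?_⟩
  · exact dotFold_mem hR _ r0 hr0 (by
      intro z hz
      exact hfin.mem_toFinset.1 (Finset.mem_toList.1 hz))
  · intro l b
    obtain ⟨z, hzR, hzl⟩ := hR.2.2.2 l b
    have hzL : z ∈ hfin.toFinset.toList := Finset.mem_toList.2 (hfin.mem_toFinset.2 hzR)
    have := dotFold_sle_mem hsbm hfin.toFinset.toList r0 z hzL l
    rwa [hzl] at this

end TopAux



section SepMain

open Classical

variable {n : ℕ} {F : Fin n → Type*}
variable {dot : ∀ i, F i → F i → F i} {m : ∀ i, F i → F i → F i → F i}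
variable {σ : ∀ i, F i → F i → Prop} {R : Set (∀ i, F i)}

private lemma pair_of_ne {A : Type*} {α β : A → A → Prop} (hle : RelLE α β)
    (hne : α ≠ β) : ∃ u v, β u v ∧ ¬ α u v := by
  by_contra h
  push_neg at h
  apply hne
  funext u v
  exact propext ⟨fun ha => hle u v ha, fun hb => h u v hb⟩

private lemma iscong_of_rpol_stable (hR : SubdirectProd dot m R) (j : Fin n)
    {ξ : F j → F j → Prop} (he : Equivalence ξ)
    (hst : ∀ s : ∀ l, F l → F l, RPol dot m R s → ∀ u v, ξ u v → ξ (s j u) (s j v)) :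
    IsCong (dot j) (m j) ξ := by
  refine ⟨he, ?_, ?_⟩
  · intro u u' v v' huu hvv
    obtain ⟨vb, hvbR, hvbj⟩ := hR.2.2.2 j v
    obtain ⟨ub, hubR, hubj⟩ := hR.2.2.2 j u'
    have h1 : ξ (dot j u (vb j)) (dot j u' (vb j)) :=
      hst (fun l x => dot l x (vb l))
        (RPol.dotc RPol.id (RPol.const vb hvbR)) u u' huu
    have h2 : ξ (dot j (ub j) v) (dot j (ub j) v') :=
      hst (fun l x => dot l (ub l) x)
        (RPol.dotc (RPol.const ub hubR) RPol.id) v v' hvv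
    rw [hvbj] at h1
    rw [hubj] at h2
    exact he.trans h1 h2
  · intro u u' v v' w w' huu hvv hww
    obtain ⟨vb, hvbR, hvbj⟩ := hR.2.2.2 j v
    obtain ⟨wb, hwbR, hwbj⟩ := hR.2.2.2 j w
    obtain ⟨ub, hubR, hubj⟩ := hR.2.2.2 j u'
    obtain ⟨vb', hvbR', hvbj'⟩ := hR.2.2.2 j v'
    have h1 : ξ (m j u (vb j) (wb j)) (m j u' (vb j) (wb j)) :=
      hst (fun l x => m l x (vb l) (wb l))
        (RPol.mc RPol.id (RPol.const vb hvbR) (RPol.const wb hwbR)) u u' huu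
    have h2 : ξ (m j (ub j) v (wb j)) (m j (ub j) v' (wb j)) :=
      hst (fun l x => m l (ub l) x (wb l))
        (RPol.mc (RPol.const ub hubR) RPol.id (RPol.const wb hwbR)) v v' hvv
    have h3 : ξ (m j (ub j) (vb' j) w) (m j (ub j) (vb' j) w') :=
      hst (fun l x => m l (ub l) (vb' l) x)
        (RPol.mc (RPol.const ub hubR) (RPol.const vb' hvbR') RPol.id) w w' hww
    rw [hvbj, hwbj] at h1
    rw [hubj, hwbj] at h2
    rw [hubj, hvbj'] at h3
    exact he.trans h1 (he.trans h2 h3)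

private lemma sep_case2 [∀ i, Fintype (F i)]
    (hsbm : ∀ l, IsSBM (dot l) (m l) (σ l)) (hR : SubdirectProd dot m R)
    {α β : ∀ l, F l → F l → Prop}
    (hαβ : ∀ l, InIR dot m σ l (α l) (β l))
    (i j : Fin n) (a : ∀ l, F l) (haR : a ∈ R)
    (hnsi : ∀ u v, β i u v → α i (dot i (a i) u) (dot i (a i) v))
    (hsj : IsSplit (dot j) (α j) (β j) (a j)) :
    SepIn dot m R i (α i) (β i) j (α j) (β j) := by
  classical
  have αc : ∀ l, IsCong (dot l) (m l) (α l) := fun l => (hαβ l).1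
  have βc : ∀ l, IsCong (dot l) (m l) (β l) := fun l => (hαβ l).2.1
  have hprime : ∀ l, PrimeCov (IsCong (dot l) (m l)) (α l) (β l) :=
    fun l => (hαβ l).2.2.1
  have hθ : ∀ l, RelLE (β l) (ThetaA (dot l) (σ l)) := fun l => (hαβ l).2.2.2
  obtain ⟨x₀, y₀, hbxy, haxy⟩ := pair_of_ne (hprime i).1 (hprime i).2.1
  have hMxy : InMax (dot i) (σ i) x₀ ∧ InMax (dot i) (σ i) y₀ := by
    rcases hθ i x₀ y₀ hbxy with h | h
    · exact absurd (h ▸ (αc i).1.refl x₀) haxy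
    · exact h
  obtain ⟨hMx₀, hMy₀⟩ := hMxy
  obtain ⟨T, hTR, hTmax⟩ := exists_top hsbm hR
  obtain ⟨z₀, hz₀R, hz₀i⟩ := hR.2.2.2 i x₀
  set Np := fun p : ∀ l, F l → F l =>
    RPol dot m R p ∧ α i (p i x₀) x₀ ∧ α i (p i y₀) y₀ with hNpdef
  set Gp := fun p : ∀ l, F l → F l =>
    RPol dot m R p ∧ ∀ u v, β i u v → α i (p i u) (p i v) with hGpdef
  have hNid : Np (fun _ x => x) := ⟨RPol.id, (αc i).1.refl _, (αc i).1.refl _⟩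
  have hNcomp : ∀ {p q}, Np p → Np q → Np (fun l x => p l (q l x)) := by
    intro p q hp hq
    exact ⟨rpol_comp hp.1 hq.1,
      (αc i).1.trans (rpol_pres (αc i) hp.1 hq.2.1) hp.2.1,
      (αc i).1.trans (rpol_pres (αc i) hp.1 hq.2.2) hp.2.2⟩
  have hGcompL : ∀ {p g}, RPol dot m R p → Gp g → Gp (fun l x => p l (g l x)) :=
    fun hp hg => ⟨rpol_comp hp hg.1, fun u v h => rpol_pres (αc i) hp (hg.2 u v h)⟩
  have hGcompR : ∀ {g q}, Gp g → RPol dot m R q → Gp (fun l x => g l (q l x)) :=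
    fun hg hq => ⟨rpol_comp hg.1 hq, fun u v h => hg.2 _ _ (rpol_pres (βc i) hq h)⟩
  -- the Mal'tsev correction polynomial
  have hν : ∀ g, Gp g → ∀ u v : F j, InMax (dot j) (σ j) u → InMax (dot j) (σ j) v →
      g j u = u → g j v = v → ∃ νp, Np νp ∧ α j (νp j u) (νp j v) := by
    intro g hg u v hu hv hgu hgv
    set g' := fun l (x : F l) => dot l (g l x) (T l) with hg'def
    have hg'R : RPol dot m R g' := RPol.dotc hg.1 (RPol.const T hTR)
    have hg'max : ∀ (l) (z : F l), InMax (dot l) (σ l) (g' l z) :=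
      fun l z => sbm_inmax_dot (hsbm l) _ (hTmax l)
    have hg'col : ∀ u v, β i u v → α i (g' i u) (g' i v) :=
      fun u v h => (αc i).2.1 _ _ _ _ (hg.2 u v h) ((αc i).1.refl _)
    have hkR : (fun l => g' l (z₀ l)) ∈ R := rpol_app_mem hR hg'R hz₀R
    refine ⟨fun l x => m l x (g' l x) (g' l (z₀ l)),
      ⟨RPol.mc RPol.id hg'R (RPol.const _ hkR), ?_, ?_⟩, ?_⟩
    · show α i (m i x₀ (g' i x₀) (g' i (z₀ i))) x₀
      have h1 : g' i (z₀ i) = g' i x₀ := by rw [hz₀i]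
      rw [h1, sbm_m_right (hsbm i) (sbm_inmax_sigma (hsbm i) hMx₀ (hg'max i x₀))]
      exact (αc i).1.refl x₀
    · show α i (m i y₀ (g' i y₀) (g' i (z₀ i))) y₀
      have hcol : α i (g' i y₀) (g' i (z₀ i)) := by
        rw [hz₀i]; exact hg'col y₀ x₀ ((βc i).1.symm hbxy)
      have h2 : α i (m i y₀ (g' i y₀) (g' i (z₀ i)))
          (m i y₀ (g' i (z₀ i)) (g' i (z₀ i))) :=
        (αc i).2.2 _ _ _ _ _ _ ((αc i).1.refl y₀) hcol ((αc i).1.refl _)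
      have h3 : m i y₀ (g' i (z₀ i)) (g' i (z₀ i)) = y₀ :=
        sbm_m_right (hsbm i) (sbm_inmax_sigma (hsbm i) hMy₀ (hg'max i _))
      rw [h3] at h2; exact h2
    · show α j (m j u (g' j u) (g' j (z₀ j))) (m j v (g' j v) (g' j (z₀ j)))
      have h4 : g' j u = u := by
        show dot j (g j u) (T j) = u
        rw [hgu]; exact sbm_dot_inmax_eq (hsbm j) hu (hTmax j)
      have h5 : g' j v = v := by
        show dot j (g j v) (T j) = v
        rw [hgv]; exact sbm_dot_inmax_eq (hsbm j) hv (hTmax j)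
      have h6 : m j u (g' j u) (g' j (z₀ j)) = g' j (z₀ j) := by
        rw [h4]
        exact sbm_m_left (hsbm j) (sbm_inmax_sigma (hsbm j) (hg'max j _) hu)
      have h7 : m j v (g' j v) (g' j (z₀ j)) = g' j (z₀ j) := by
        rw [h5]
        exact sbm_m_left (hsbm j) (sbm_inmax_sigma (hsbm j) (hg'max j _) hv)
      rw [h6, h7]
      exact (αc j).1.refl _
  -- the congruence ξ*
  set Xs := fun u v : F j => β j u v ∧ ∀ g, Gp g →
    ∃ h, Np h ∧ α j (h j (g j u)) (h j (g j v)) with hXsdef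
  have hXse : Equivalence Xs := by
    constructor
    · intro u
      exact ⟨(βc j).1.refl u, fun g hg => ⟨_, hNid, (αc j).1.refl _⟩⟩
    · intro u v h
      refine ⟨(βc j).1.symm h.1, fun g hg => ?_⟩
      obtain ⟨h1, hN, hα⟩ := h.2 g hg
      exact ⟨h1, hN, (αc j).1.symm hα⟩
    · intro u v w huv hvw
      refine ⟨(βc j).1.trans huv.1 hvw.1, fun g hg => ?_⟩
      obtain ⟨h1, hN1, hα1⟩ := huv.2 g hg
      obtain ⟨h3, hN3, hα3⟩ := hvw.2 (fun l x => h1 l (g l x)) (hGcompL hN1.1 hg)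
      exact ⟨fun l x => h3 l (h1 l x), hNcomp hN3 hN1,
        (αc j).1.trans (rpol_pres (αc j) hN3.1 hα1) hα3⟩
  have hXsst : ∀ s : ∀ l, F l → F l, RPol dot m R s →
      ∀ u v, Xs u v → Xs (s j u) (s j v) := by
    intro s hs u v huv
    refine ⟨rpol_pres (βc j) hs huv.1, fun g hg => ?_⟩
    obtain ⟨h1, hN, hα⟩ := huv.2 (fun l x => g l (s l x)) (hGcompR hg hs)
    exact ⟨h1, hN, hα⟩
  have hXsc : IsCong (dot j) (m j) Xs := iscong_of_rpol_stable hR j hXse hXsst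
  have hXsleα : RelLE (α j) Xs := fun u v h =>
    ⟨(hprime j).1 u v h, fun g hg => ⟨_, hNid, rpol_pres (αc j) hg.1 h⟩⟩
  have hXsβ : Xs = β j := by
    rcases (hprime j).2.2 Xs hXsc hXsleα (fun u v h => h.1) with hXs | hXs
    · exfalso
      have hXsα : ∀ u v : F j, β j u v → ¬ α j u v →
          ∃ g, Gp g ∧ ∀ h, Np h → ¬ α j (h j (g j u)) (h j (g j v)) := by
        intro u v hb hna
        have hnXs : ¬ Xs u v := by rw [hXs]; exact hna
        by_contra hc
        push_neg at hc
        exact hnXs ⟨hb, fun g hg => hc g hg⟩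
      set Bad := fun P : F j × F j =>
        β j P.1 P.2 ∧ ∀ h, Np h → ¬ α j (h j P.1) (h j P.2) with hBaddef
      have hBadna : ∀ P, Bad P → ¬ α j P.1 P.2 := fun P hP => hP.2 _ hNid
      have hstep : ∀ P, Bad P → ∃ g, Gp g ∧ Bad (g j P.1, g j P.2) := by
        intro P hP
        obtain ⟨g, hg, hbad⟩ := hXsα P.1 P.2 hP.1 (hBadna P hP)
        exact ⟨g, hg, rpol_pres (βc j) hg.1 hP.1, hbad⟩
      obtain ⟨u₁, v₁, hb1, hna1⟩ := pair_of_ne (hprime j).1 (hprime j).2.1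
      obtain ⟨g0, hg0, hbad0⟩ := hXsα u₁ v₁ hb1 hna1
      have hP0 : Bad (g0 j u₁, g0 j v₁) := ⟨rpol_pres (βc j) hg0.1 hb1, hbad0⟩
      have hSstep : ∀ s : {P : F j × F j // Bad P},
          ∃ g, Gp g ∧ Bad (g j s.val.1, g j s.val.2) :=
        fun s => hstep s.val s.prop
      choose gf hgf hbadf using hSstep
      let nxt : {P : F j × F j // Bad P} → {P : F j × F j // Bad P} :=
        fun s => ⟨(gf s j s.val.1, gf s j s.val.2), hbadf s⟩
      let seq : ℕ → {P : F j × F j // Bad P} :=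
        fun k => Nat.rec ⟨_, hP0⟩ (fun _ s => nxt s) k
      let gs : ℕ → ∀ l, F l → F l := fun k => gf (seq k)
      have hgsG : ∀ k, Gp (gs k) := fun k => hgf (seq k)
      have hval1 : ∀ k, (seq (k+1)).val.1 = gs k j (seq k).val.1 := fun k => rfl
      have hval2 : ∀ k, (seq (k+1)).val.2 = gs k j (seq k).val.2 := fun k => rfl
      let comp : ℕ → ℕ → ∀ l, F l → F l := fun a k =>
        Nat.rec (fun _ x => x) (fun k' w => fun l x => gs (a + k') l (w l x)) k
      have hcompG : ∀ a k, Gp (comp a (k+1)) := by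
        intro a k
        induction k with
        | zero => exact hGcompR (hgsG a) RPol.id
        | succ k ih => exact hGcompL (hgsG (a + (k+1))).1 ih
      have hcompv1 : ∀ a k, comp a k j (seq a).val.1 = (seq (a+k)).val.1 := by
        intro a k
        induction k with
        | zero => rfl
        | succ k ih =>
            show gs (a+k) j (comp a k j (seq a).val.1) = (seq (a+k+1)).val.1
            rw [ih, hval1 (a+k)]
      have hcompv2 : ∀ a k, comp a k j (seq a).val.2 = (seq (a+k)).val.2 := by
        intro a k
        induction k with
        | zero => rfl
        | succ k ih =>
            show gs (a+k) j (comp a k j (seq a).val.2) = (seq (a+k+1)).val.2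
            rw [ih, hval2 (a+k)]
      obtain ⟨A, B, hAB, hEQ⟩ :=
        Finite.exists_ne_map_eq_of_infinite (fun k : ℕ => (seq k).val)
      obtain ⟨A, B, hlt, hEQ⟩ : ∃ A B, A < B ∧ (seq A).val = (seq B).val := by
        rcases lt_or_gt_of_ne hAB with h | h
        · exact ⟨A, B, h, hEQ⟩
        · exact ⟨B, A, h, hEQ.symm⟩
      obtain ⟨k, hk⟩ : ∃ k, B = A + (k+1) := ⟨B - A - 1, by omega⟩
      have hWG : Gp (comp A (k+1)) := hcompG A k
      have hWfix1 : comp A (k+1) j (seq A).val.1 = (seq A).val.1 := by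
        rw [hcompv1 A (k+1), ← hk, ← hEQ]
      have hWfix2 : comp A (k+1) j (seq A).val.2 = (seq A).val.2 := by
        rw [hcompv2 A (k+1), ← hk, ← hEQ]
      have hMp : InMax (dot j) (σ j) (seq A).val.1 ∧
          InMax (dot j) (σ j) (seq A).val.2 := by
        rcases hθ j _ _ (seq A).prop.1 with h | h
        · exact absurd (h ▸ (αc j).1.refl _) (hBadna _ (seq A).prop)
        · exact h
      obtain ⟨νp, hνN, hνα⟩ := hν _ hWG _ _ hMp.1 hMp.2 hWfix1 hWfix2
      exact (seq A).prop.2 νp hνN hνα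
    · exact hXs
  -- the congruence ξ₂
  set X2 := fun u v : F j => β j u v ∧ ∀ p, RPol dot m R p →
    ∃ h, Np h ∧ α j (h j (p j u)) (h j (p j v)) with hX2def
  have hX2e : Equivalence X2 := by
    constructor
    · intro u
      exact ⟨(βc j).1.refl u, fun p hp => ⟨_, hNid, (αc j).1.refl _⟩⟩
    · intro u v h
      refine ⟨(βc j).1.symm h.1, fun p hp => ?_⟩
      obtain ⟨h1, hN, hα⟩ := h.2 p hp
      exact ⟨h1, hN, (αc j).1.symm hα⟩
    · intro u v w huv hvw
      refine ⟨(βc j).1.trans huv.1 hvw.1, fun p hp => ?_⟩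
      obtain ⟨h1, hN1, hα1⟩ := huv.2 p hp
      obtain ⟨h3, hN3, hα3⟩ := hvw.2 (fun l x => h1 l (p l x)) (rpol_comp hN1.1 hp)
      exact ⟨fun l x => h3 l (h1 l x), hNcomp hN3 hN1,
        (αc j).1.trans (rpol_pres (αc j) hN3.1 hα1) hα3⟩
  have hX2st : ∀ s : ∀ l, F l → F l, RPol dot m R s →
      ∀ u v, X2 u v → X2 (s j u) (s j v) := by
    intro s hs u v huv
    refine ⟨rpol_pres (βc j) hs huv.1, fun p hp => ?_⟩
    obtain ⟨h1, hN, hα⟩ := huv.2 (fun l x => p l (s l x)) (rpol_comp hp hs)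
    exact ⟨h1, hN, hα⟩
  have hX2c : IsCong (dot j) (m j) X2 := iscong_of_rpol_stable hR j hX2e hX2st
  have hX2leα : RelLE (α j) X2 := fun u v h =>
    ⟨(hprime j).1 u v h, fun p hp => ⟨_, hNid, rpol_pres (αc j) hp h⟩⟩
  have hR3 : ∀ u v, β j u v → ∃ h, Np h ∧ α j (h j u) (h j v) := by
    rcases (hprime j).2.2 X2 hX2c hX2leα (fun u v h => h.1) with hX2 | hX2
    · exfalso
      obtain ⟨y, y', hby, hnαy⟩ := hsj
      have hbw : β j (dot j (a j) y) (dot j (a j) y') :=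
        (βc j).2.1 _ _ _ _ ((βc j).1.refl (a j)) hby
      have hnXw : ¬ X2 (dot j (a j) y) (dot j (a j) y') := by
        rw [hX2]; exact hnαy
      have hex : ∃ p, RPol dot m R p ∧ ∀ h, Np h →
          ¬ α j (h j (p j (dot j (a j) y))) (h j (p j (dot j (a j) y'))) := by
        by_contra hc
        push_neg at hc
        exact hnXw ⟨hbw, hc⟩
      obtain ⟨p, hp, himm⟩ := hex
      have hgG : Gp (fun l x => p l (dot l (a l) x)) :=
        ⟨rpol_comp hp (RPol.dotc (RPol.const a haR) RPol.id),
          fun u v h => rpol_pres (αc i) hp (hnsi u v h)⟩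
      have hXsw : Xs (dot j (a j) y) (dot j (a j) y') := by rw [hXsβ]; exact hbw
      obtain ⟨h, hhN, hhα⟩ := hXsw.2 _ hgG
      have hfix1 : dot j (a j) (dot j (a j) y) = dot j (a j) y :=
        (hsbm j).2.2.2.2.2.2 (a j) y
      have hfix2 : dot j (a j) (dot j (a j) y') = dot j (a j) y' :=
        (hsbm j).2.2.2.2.2.2 (a j) y'
      have hhα' : α j (h j (p j (dot j (a j) (dot j (a j) y))))
          (h j (p j (dot j (a j) (dot j (a j) y')))) := hhα
      rw [hfix1, hfix2] at hhα'
      exact himm h hhN hhα'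
    · intro u v hb
      have hx2 : X2 u v := by rw [hX2]; exact hb
      obtain ⟨h, hN, hα⟩ := hx2.2 (fun _ x => x) RPol.id
      exact ⟨h, hN, hα⟩
  -- maximal collapser
  have hqex : ∃ q, Np q ∧ ∀ u v, β j u v → α j (q j u) (q j v) := by
    set cset := fun q : ∀ l, F l → F l =>
      Finset.univ.filter (fun P : F j × F j =>
        β j P.1 P.2 ∧ α j (q j P.1) (q j P.2)) with hcsetdef
    set SV := {k : ℕ | ∃ q, Np q ∧ (cset q).card = k} with hSVdef
    have hSVne : SV.Nonempty := ⟨_, _, hNid, rfl⟩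
    have hSVbdd : BddAbove SV := by
      refine ⟨(Finset.univ : Finset (F j × F j)).card, ?_⟩
      rintro k ⟨q, _, rfl⟩
      exact Finset.card_filter_le _ _
    obtain ⟨q, hqN, hqc⟩ := Nat.sSup_mem hSVne hSVbdd
    refine ⟨q, hqN, ?_⟩
    by_contra hc
    push_neg at hc
    obtain ⟨u, v, hbuv, hnuv⟩ := hc
    obtain ⟨h1, hh1N, hh1α⟩ := hR3 (q j u) (q j v) (rpol_pres (βc j) hqN.1 hbuv)
    have hq'N : Np (fun l x => h1 l (q l x)) := hNcomp hh1N hqN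
    have hss : cset q ⊂ cset (fun l x => h1 l (q l x)) := by
      constructor
      · intro P hP
        simp only [hcsetdef, Finset.mem_filter, Finset.mem_univ, true_and] at hP ⊢
        exact ⟨hP.1, rpol_pres (αc j) hh1N.1 hP.2⟩
      · intro hsub
        have h1mem : (u, v) ∈ cset (fun l x => h1 l (q l x)) := by
          simp only [hcsetdef, Finset.mem_filter, Finset.mem_univ, true_and]
          exact ⟨hbuv, hh1α⟩
        have h2mem := hsub h1mem
        simp only [hcsetdef, Finset.mem_filter, Finset.mem_univ, true_and] at h2mem
        exact hnuv h2mem.2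
    have hlt : (cset q).card < (cset (fun l x => h1 l (q l x))).card :=
      Finset.card_lt_card hss
    have hmem2 : (cset (fun l x => h1 l (q l x))).card ∈ SV := ⟨_, hq'N, rfl⟩
    have := le_csSup hSVbdd hmem2
    omega
  obtain ⟨q, hqN, hqall⟩ := hqex
  refine ⟨q, hqN.1, ?_, fun u v h => hqall u v h⟩
  intro hPM
  exact haxy ((αc i).1.trans ((αc i).1.symm hqN.2.1)
    ((αc i).1.trans (hPM x₀ y₀ hbxy) hqN.2.2))

end SepMain

/-- If coordinates `i ≠ j` of a subdirect product `R` of SBM algebras are not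
`ᾱβ̄`-aligned (for given prime intervals `α_l ≺ β_l ≤ θ_{A_l}`), then `(α_i,β_i)`
can be separated from `(α_j,β_j)` in `R`. -/
theorem not_aligned_implies_separated {n : ℕ} {F : Fin n → Type*}
    [∀ i, Fintype (F i)] [∀ i, Nonempty (F i)]
    (dot : ∀ i, F i → F i → F i) (m : ∀ i, F i → F i → F i → F i)
    (σ : ∀ i, F i → F i → Prop)
    (hsbm : ∀ i, IsSBM (dot i) (m i) (σ i))
    (R : Set (∀ i, F i)) (hR : SubdirectProd dot m R)
    (α β : ∀ l, F l → F l → Prop)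
    (hαβ : ∀ l, InIR dot m σ l (α l) (β l))
    (i j : Fin n) (hij : i ≠ j)
    (hnal : ¬ ∀ x ∈ R,
      (IsSplit (dot i) (α i) (β i) (x i) ↔ IsSplit (dot j) (α j) (β j) (x j))) :
    SepIn dot m R i (α i) (β i) j (α j) (β j) := by
  push_neg at hnal
  obtain ⟨x, hxR, hx⟩ := hnal
  rcases hx with ⟨hsi, hsj⟩ | ⟨hsi, hsj⟩
  · obtain ⟨b, c, hbc, hnα⟩ := hsi
    have hnsj : ∀ u v, β j u v → α j (dot j (x j) u) (dot j (x j) v) := by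
      intro u v h
      by_contra hcon
      exact hsj ⟨u, v, h, hcon⟩
    exact ⟨fun l y => dot l (x l) y, RPol.dotc (RPol.const x hxR) RPol.id,
      fun hPM => hnα (hPM b c hbc), fun u v h => hnsj u v h⟩
  · have hnsi : ∀ u v, β i u v → α i (dot i (x i) u) (dot i (x i) v) := by
      intro u v h
      by_contra hcon
      exact hsi ⟨u, v, h, hcon⟩
    exact sep_case2 hsbm hR hαβ i j x hxR hnsi hsj

end SBMPaper
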